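/- Let v₀ > 0, τ > 0, a_min < 0 ≤ a_max, and define D(δ) = (2v₀ + δv₀ + 2τ·a_max − τ·a_min)/(2v₀ + δv₀ + 2τ·a_max − 3τ·a_min) for δ ≥ 0. Let (δ_p)_{p∈ℕ} be given by δ_0 ≥ 0 and δ_{p+1} = δ_p·D(δ_p). Then for every p: 0 ≤ δ_{p+1} ≤ δ_p, and the geometric bounds δ_0·D(0)^p ≤ δ_p ≤ δ_0·D(δ_0)^p hold; consequently the follower speed v₀(1 + δ_p) never drops below v₀ and converges geometrically to v₀. -/
import Mathlib


/-- under the recursion `δ_{p+1} = δ_p · D(δ_p)`, the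
speed-discrepancy sequence is nonnegative, nonincreasing, sandwiched by
geometric bounds, and the follower speed `v₀(1 + δ_p)` stays at least `v₀`
and converges to `v₀`. -/
theorem discrepancy_geometric_decay
    (v₀ τ amin amax : ℝ)
    (hv₀ : 0 < v₀) (hτ : 0 < τ) (hamin : amin < 0) (hamax : 0 ≤ amax)
    (D : ℝ → ℝ)
    (hD : ∀ δ, D δ = (2 * v₀ + δ * v₀ + 2 * τ * amax - τ * amin) /
      (2 * v₀ + δ * v₀ + 2 * τ * amax - 3 * τ * amin))
    (δ : ℕ → ℝ) (hδ0 : 0 ≤ δ 0)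
    (hrec : ∀ p, δ (p + 1) = δ p * D (δ p)) :
    (∀ p, 0 ≤ δ (p + 1) ∧ δ (p + 1) ≤ δ p) ∧
    (∀ p, δ 0 * D 0 ^ p ≤ δ p ∧ δ p ≤ δ 0 * D (δ 0) ^ p) ∧
    (∀ p, v₀ ≤ v₀ * (1 + δ p)) ∧
    Filter.Tendsto (fun p => v₀ * (1 + δ p)) Filter.atTop (nhds v₀) := by
  have hN : ∀ d : ℝ, 0 ≤ d → 0 < 2 * v₀ + d * v₀ + 2 * τ * amax - 3 * τ * amin := by
    intro d hd
    nlinarith [mul_nonneg hd hv₀.le, mul_nonneg hτ.le hamax, mul_neg_of_pos_of_neg hτ hamin]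
  have hM : ∀ d : ℝ, 0 ≤ d → 0 < 2 * v₀ + d * v₀ + 2 * τ * amax - τ * amin := by
    intro d hd
    nlinarith [mul_nonneg hd hv₀.le, mul_nonneg hτ.le hamax, mul_neg_of_pos_of_neg hτ hamin]
  have hDpos : ∀ d : ℝ, 0 ≤ d → 0 < D d := by
    intro d hd; rw [hD]; exact div_pos (hM d hd) (hN d hd)
  have hDlt1 : ∀ d : ℝ, 0 ≤ d → D d < 1 := by
    intro d hd; rw [hD, div_lt_one (hN d hd)]
    nlinarith [mul_neg_of_pos_of_neg hτ hamin]
  have hDmono : ∀ a b : ℝ, 0 ≤ a → a ≤ b → D a ≤ D b := by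
    intro a b ha hab
    rw [hD, hD, div_le_div_iff₀ (hN a ha) (hN b (ha.trans hab))]
    nlinarith [mul_neg_of_pos_of_neg hτ hamin, mul_le_mul_of_nonneg_right hab hv₀.le]
  -- nonnegativity of δ
  have hnn : ∀ p, 0 ≤ δ p := by
    intro p
    induction p with
    | zero => exact hδ0
    | succ n ih => rw [hrec]; exact mul_nonneg ih (hDpos _ ih).le
  have hdec : ∀ p, δ (p + 1) ≤ δ p := by
    intro p
    rw [hrec]
    nlinarith [hnn p, (hDlt1 _ (hnn p)), mul_le_mul_of_nonneg_left (hDlt1 _ (hnn p)).le (hnn p)]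
  have hle0 : ∀ p, δ p ≤ δ 0 := by
    intro p
    induction p with
    | zero => exact le_rfl
    | succ n ih => exact (hdec n).trans ih
  have hsand : ∀ p, δ 0 * D 0 ^ p ≤ δ p ∧ δ p ≤ δ 0 * D (δ 0) ^ p := by
    intro p
    induction p with
    | zero => simp
    | succ n ih =>
      obtain ⟨hl, hu⟩ := ih
      constructor
      · rw [hrec, pow_succ, ← mul_assoc]
        have h1 : D 0 ≤ D (δ n) := hDmono 0 (δ n) le_rfl (hnn n)
        have h2 : δ 0 * D 0 ^ n * D 0 ≤ δ n * D 0 :=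
          mul_le_mul_of_nonneg_right hl (hDpos 0 le_rfl).le
        have h3 : δ n * D 0 ≤ δ n * D (δ n) := mul_le_mul_of_nonneg_left h1 (hnn n)
        linarith
      · rw [hrec, pow_succ, ← mul_assoc]
        have h1 : D (δ n) ≤ D (δ 0) := hDmono (δ n) (δ 0) (hnn n) (hle0 n)
        have h3 : δ n * D (δ n) ≤ δ n * D (δ 0) := mul_le_mul_of_nonneg_left h1 (hnn n)
        have h2 : δ n * D (δ 0) ≤ δ 0 * D (δ 0) ^ n * D (δ 0) :=
          mul_le_mul_of_nonneg_right hu (hDpos _ hδ0).le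
        linarith
  have hδ0' : Filter.Tendsto δ Filter.atTop (nhds 0) := by
    have hup : Filter.Tendsto (fun p => δ 0 * D (δ 0) ^ p) Filter.atTop (nhds (δ 0 * 0)) :=
      (tendsto_pow_atTop_nhds_zero_of_lt_one (hDpos _ hδ0).le (hDlt1 _ hδ0)).const_mul _
    rw [mul_zero] at hup
    exact tendsto_of_tendsto_of_tendsto_of_le_of_le tendsto_const_nhds hup
      (fun p => hnn p) (fun p => (hsand p).2)
  refine ⟨fun p => ⟨hnn (p + 1), hdec p⟩, hsand, fun p => ?_, ?_⟩
  · nlinarith [hnn p]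
  · have h1 : Filter.Tendsto (fun p => (1 : ℝ) + δ p) Filter.atTop (nhds (1 + 0)) :=
      Filter.Tendsto.add tendsto_const_nhds hδ0'
    have h2 := h1.const_mul v₀
    simpa using h2
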